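/- Let t ∈ ℝ, μ > 0, σ > 0, λ > (μ−t)₋, and set m = λ − μ + t (so m > 0). If σ ≤ m, then the supremum of E[(X−t)₊²] over symmetric distributions with mean μ, variance σ², and E[(X−t)₋] ≤ λ equals: σ² + (t−μ)² if μ − m ≤ t ≤ μ − σ; (1/2)(μ − t + σ)² if μ − σ < t ≤ μ; and σ²/2 if t > μ. -/

import Mathlib

open MeasureTheory

/-- Values of the target semi-variance `E[((X-t)₊)²]` over symmetric distributions with
mean `μ`, variance `σ²` and expected excess profit `E[(X-t)₋] ≤ lam`. -/
def symTSVSetLam (μ σ t lam : ℝ) : Set ℝ :=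
  {y : ℝ | ∃ P : Measure ℝ, IsProbabilityMeasure P ∧ Integrable (fun x => x ^ 2) P ∧
    (∃ a : ℝ, ∀ x : ℝ, P {z | a + x < z} = P {z | z < a - x}) ∧
    (∫ x, x ∂P) = μ ∧ (∫ x, x ^ 2 ∂P) = μ ^ 2 + σ ^ 2 ∧
    (∫ x, max (t - x) 0 ∂P) ≤ lam ∧
    y = ∫ x, (max (x - t) 0) ^ 2 ∂P}

open Set

section helpers

noncomputable def tp (a s p : ℝ) : Measure ℝ :=
  ENNReal.ofReal p • (Measure.dirac (a - s) + Measure.dirac (a + s)) +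
    ENNReal.ofReal (1 - 2*p) • Measure.dirac a

lemma tp_prob (a s p : ℝ) (hp0 : 0 ≤ p) (hp1 : 2*p ≤ 1) : IsProbabilityMeasure (tp a s p) := by
  constructor
  simp only [tp, Measure.coe_add, Measure.coe_smul, Pi.add_apply, Pi.smul_apply,
    Measure.add_apply, smul_eq_mul, measure_univ, mul_one]
  rw [mul_add, mul_one]
  rw [← ENNReal.ofReal_add hp0 hp0, ← ENNReal.ofReal_add (by linarith) (by linarith)]
  norm_num
  ring

lemma integrable_dirac' {f : ℝ → ℝ} (hf : Measurable f) (a : ℝ) :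
    Integrable f (Measure.dirac a) := by
  refine ⟨hf.aestronglyMeasurable, ?_⟩
  rw [HasFiniteIntegral, lintegral_dirac]
  exact ENNReal.coe_lt_top

lemma tp_integrable {f : ℝ → ℝ} (hf : Measurable f) (a s p : ℝ) : Integrable f (tp a s p) := by
  unfold tp
  exact (((integrable_dirac' hf _).add_measure (integrable_dirac' hf _)).smul_measure
    ENNReal.ofReal_ne_top).add_measure ((integrable_dirac' hf _).smul_measure ENNReal.ofReal_ne_top)

lemma tp_integral {f : ℝ → ℝ} (hf : Measurable f) (a s p : ℝ) (hp0 : 0 ≤ p) (hp1 : 2*p ≤ 1) :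
    ∫ x, f x ∂(tp a s p) = p * (f (a - s) + f (a + s)) + (1 - 2*p) * f a := by
  rw [tp, integral_add_measure, integral_smul_measure, integral_smul_measure,
    integral_add_measure (integrable_dirac' hf _) (integrable_dirac' hf _),
    integral_dirac, integral_dirac, integral_dirac,
    ENNReal.toReal_ofReal hp0, ENNReal.toReal_ofReal (by linarith)]
  · simp [smul_eq_mul]
  · exact ((integrable_dirac' hf _).add_measure (integrable_dirac' hf _)).smul_measure
      ENNReal.ofReal_ne_top
  · exact (integrable_dirac' hf _).smul_measure ENNReal.ofReal_ne_top

lemma tp_symm (a s p : ℝ) (x : ℝ) : tp a s p {z | a + x < z} = tp a s p {z | z < a - x} := by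
  have e1 : (a + x < a - s) ↔ (a + s < a - x) := by constructor <;> intro <;> linarith
  have e2 : (a + x < a + s) ↔ (a - s < a - x) := by constructor <;> intro <;> linarith
  have e3 : (a + x < a) ↔ (a < a - x) := by constructor <;> intro <;> linarith
  simp only [tp, Measure.coe_add, Measure.coe_smul, Pi.add_apply, Pi.smul_apply,
    Measure.add_apply, Measure.dirac_apply, indicator_apply, mem_setOf_eq, e1, e2, e3,
    smul_eq_mul, Pi.one_apply]
  ring

variable {P : Measure ℝ} [IsProbabilityMeasure P]

lemma cont_tgt (t : ℝ) : Continuous (fun x : ℝ => (max (x - t) 0) ^ 2) := by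
  exact ((continuous_id.sub continuous_const).max continuous_const).pow 2

lemma int_id (hP2 : Integrable (fun x => x ^ 2) P) : Integrable (fun x : ℝ => x) P := by
  refine ((integrable_const (1:ℝ)).add hP2).mono' measurable_id.aestronglyMeasurable ?_
  filter_upwards with x
  simp only [Pi.add_apply, Real.norm_eq_abs]
  rcases abs_cases x with ⟨h, hx⟩ | ⟨h, hx⟩ <;> rw [h] <;>
    nlinarith [sq_nonneg (x-1), sq_nonneg (x+1)]

lemma int_sq_sub (hP2 : Integrable (fun x => x ^ 2) P) (c : ℝ) :
    Integrable (fun x : ℝ => (x - c) ^ 2) P := by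
  have : (fun x : ℝ => (x - c) ^ 2) = fun x => x ^ 2 - 2*c*x + c ^ 2 := by
    funext x; ring
  rw [this]
  have i1 : Integrable (fun x : ℝ => x ^ 2 - 2*c*x) P := hP2.sub ((int_id hP2).const_mul (2*c))
  exact i1.add (integrable_const _)

lemma int_tgt (hP2 : Integrable (fun x => x ^ 2) P) (t : ℝ) :
    Integrable (fun x : ℝ => (max (x - t) 0) ^ 2) P := by
  refine (int_sq_sub hP2 t).mono' (cont_tgt t).aestronglyMeasurable ?_
  filter_upwards with x
  rw [Real.norm_eq_abs, abs_of_nonneg (by positivity)]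
  rcases le_or_gt (x - t) 0 with h | h
  · rw [max_eq_right h]; simpa using sq_nonneg (x - t)
  · rw [max_eq_left h.le]

lemma int_con (hP2 : Integrable (fun x => x ^ 2) P) (t : ℝ) :
    Integrable (fun x : ℝ => max (t - x) 0) P := by
  have i1 : Integrable (fun x : ℝ => |t| + |x|) P := (integrable_const _).add (int_id hP2).abs
  refine i1.mono' ((continuous_const.sub continuous_id).max continuous_const).aestronglyMeasurable ?_
  filter_upwards with x
  rw [Real.norm_eq_abs, abs_of_nonneg (le_max_right _ _)]
  rcases abs_cases x with ⟨h, hx⟩ | ⟨h, hx⟩ <;> rcases abs_cases t with ⟨h', hx'⟩ | ⟨h', hx'⟩ <;>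
    rcases max_cases (t - x) 0 with ⟨hm, _⟩ | ⟨hm, _⟩ <;> rw [hm] <;> linarith

lemma moment2 {μ σ : ℝ} (hP2 : Integrable (fun x => x ^ 2) P)
    (hmean : (∫ x, x ∂P) = μ) (hmom : (∫ x, x ^ 2 ∂P) = μ ^ 2 + σ ^ 2) (c : ℝ) :
    ∫ x, (x - c) ^ 2 ∂P = σ ^ 2 + (μ - c) ^ 2 := by
  have e : (fun x : ℝ => (x - c) ^ 2) = fun x => x ^ 2 - 2*c*x + c ^ 2 := by
    funext x; ring
  have i2 : Integrable (fun x : ℝ => 2*c*x) P := (int_id hP2).const_mul (2*c)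
  have i1 : Integrable (fun x : ℝ => x ^ 2 - 2*c*x) P := hP2.sub i2
  have e2 : ∫ x, 2*c*x ∂P = 2*c*μ := by
    rw [integral_const_mul, hmean]
  rw [e, integral_add i1 (integrable_const _), integral_sub hP2 i2, e2, hmom,
    integral_const, probReal_univ]
  simp; ring

lemma ub1 {μ σ t : ℝ} (hP2 : Integrable (fun x => x ^ 2) P)
    (hmean : (∫ x, x ∂P) = μ) (hmom : (∫ x, x ^ 2 ∂P) = μ ^ 2 + σ ^ 2) :
    ∫ x, (max (x - t) 0) ^ 2 ∂P ≤ σ ^ 2 + (t - μ) ^ 2 := by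
  have h := integral_mono (int_tgt hP2 t) (int_sq_sub hP2 t) (fun x => ?_)
  · rw [moment2 hP2 hmean hmom t] at h
    calc _ ≤ σ ^ 2 + (μ - t) ^ 2 := h
      _ = σ ^ 2 + (t - μ) ^ 2 := by ring
  · rcases le_or_gt (x - t) 0 with h | h
    · rw [max_eq_right h]; simpa using sq_nonneg (x - t)
    · rw [max_eq_left h.le]

lemma map_eq (a : ℝ) (hsym : ∀ x : ℝ, P {z | a + x < z} = P {z | z < a - x}) :
    Measure.map (fun x => 2*a - x) P = P := by
  have hr : Measurable fun x : ℝ => 2*a - x := by fun_prop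
  haveI : IsProbabilityMeasure (Measure.map (fun x => 2*a - x) P) :=
    Measure.isProbabilityMeasure_map hr.aemeasurable
  refine Measure.ext_of_Iic _ _ (fun c => ?_)
  rw [Measure.map_apply hr measurableSet_Iic]
  have hpre : (fun x : ℝ => 2*a - x) ⁻¹' Iic c = Ici (2*a - c) := by
    ext x; simp only [mem_preimage, mem_Iic, mem_Ici]; constructor <;> intro <;> linarith
  rw [hpre]
  have h3 : P (Ioi c) = P (Iio (2*a - c)) := by
    have := hsym (c - a)
    have e1 : {z : ℝ | a + (c - a) < z} = Ioi c := by
      ext z; simp only [mem_setOf_eq, mem_Ioi]; constructor <;> intro <;> linarith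
    have e2 : {z : ℝ | z < a - (c - a)} = Iio (2*a - c) := by
      ext z; simp only [mem_setOf_eq, mem_Iio]; constructor <;> intro <;> linarith
    rwa [e1, e2] at this
  rw [← compl_Iio, measure_compl measurableSet_Iio (measure_ne_top _ _), measure_univ, ← h3,
    ← compl_Ioi, measure_compl measurableSet_Ioi (measure_ne_top _ _), measure_univ]

lemma center_eq {a μ : ℝ} (hP2 : Integrable (fun x => x ^ 2) P)
    (hmap : Measure.map (fun x => 2*a - x) P = P) (hmean : (∫ x, x ∂P) = μ) : a = μ := by
  have hx := int_id hP2
  have h1 : ∫ x, (2*a - x) ∂P = ∫ x, x ∂P := by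
    have h := integral_map (μ := P) (φ := fun x : ℝ => 2*a - x)
      (measurable_const.sub measurable_id).aemeasurable
      (f := fun x : ℝ => x) measurable_id.aestronglyMeasurable
    rw [hmap] at h
    exact h.symm
  rw [integral_sub (integrable_const _) hx, integral_const, probReal_univ, hmean] at h1
  simp at h1; linarith

lemma reflect_bound {μ t : ℝ} (hP2 : Integrable (fun x => x ^ 2) P)
    (hmap : Measure.map (fun x => 2*μ - x) P = P)
    {g : ℝ → ℝ} (hg : Integrable g P)
    (hpt : ∀ x, (max (x - t) 0) ^ 2 + (max ((2*μ - x) - t) 0) ^ 2 ≤ g x) :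
    2 * ∫ x, (max (x - t) 0) ^ 2 ∂P ≤ ∫ x, g x ∂P := by
  set f : ℝ → ℝ := fun x => (max (x - t) 0) ^ 2 with hf
  have hcont : Continuous f := cont_tgt t
  have hmeas : Measurable (fun x : ℝ => 2*μ - x) := by fun_prop
  have hfint : Integrable f P := int_tgt hP2 t
  have h1 : ∫ x, f (2*μ - x) ∂P = ∫ x, f x ∂P := by
    conv_rhs => rw [← hmap]
    rw [integral_map hmeas.aemeasurable hcont.aestronglyMeasurable]
  have h2 : Integrable (fun x => f (2*μ - x)) P :=
    (integrable_map_measure hcont.aestronglyMeasurable hmeas.aemeasurable).mp (by rwa [hmap])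
  calc 2 * ∫ x, f x ∂P = (∫ x, f x ∂P) + ∫ x, f (2*μ - x) ∂P := by rw [h1]; ring
    _ = ∫ x, (f x + f (2*μ - x)) ∂P := (integral_add hfint h2).symm
    _ ≤ ∫ x, g x ∂P := integral_mono (hfint.add h2) hg hpt

lemma key3 (μ t x : ℝ) (ht : μ ≤ t) :
    (max (x - t) 0) ^ 2 + (max ((2*μ - x) - t) 0) ^ 2 ≤ (x - μ) ^ 2 := by
  rcases le_or_gt (x - t) 0 with h1 | h1 <;> rcases le_or_gt ((2*μ - x) - t) 0 with h2 | h2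
  · rw [max_eq_right h1, max_eq_right h2]; simpa using sq_nonneg (x - μ)
  · rw [max_eq_right h1, max_eq_left h2.le]; nlinarith
  · rw [max_eq_left h1.le, max_eq_right h2]; nlinarith
  · nlinarith

lemma key2 (σ d u : ℝ) (hσ : 0 < σ) (hd0 : 0 ≤ d) (hdσ : d ≤ σ) :
    σ * ((max (u + d) 0) ^ 2 + (max (d - u) 0) ^ 2) ≤ (σ + d) * u ^ 2 + σ * (d ^ 2 + d * σ) := by
  rcases le_or_gt (u + d) 0 with h1 | h1 <;> rcases le_or_gt (d - u) 0 with h2 | h2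
  · rw [max_eq_right h1, max_eq_right h2]; nlinarith [mul_nonneg (by linarith : (0:ℝ) ≤ σ + d) (sq_nonneg u), mul_nonneg hσ.le (by nlinarith : (0:ℝ) ≤ d ^ 2 + d * σ)]
  · rw [max_eq_right h1, max_eq_left h2.le]
    nlinarith [mul_nonneg hd0 (sq_nonneg (u + σ))]
  · rw [max_eq_left h1.le, max_eq_right h2]
    nlinarith [mul_nonneg hd0 (sq_nonneg (u - σ))]
  · rw [max_eq_left h1.le, max_eq_left h2.le]
    have hu2 : u ^ 2 ≤ d ^ 2 := by nlinarith
    nlinarith [mul_nonneg (sub_nonneg.2 hdσ) (sub_nonneg.2 (hu2.trans (by nlinarith : d ^ 2 ≤ d * σ)))]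
lemma meas_sq : Measurable (fun x : ℝ => x ^ 2) := by fun_prop
lemma meas_id : Measurable (fun x : ℝ => x) := by fun_prop
lemma meas_con (t : ℝ) : Measurable (fun x : ℝ => max (t - x) 0) := by fun_prop
lemma meas_tgt (t : ℝ) : Measurable (fun x : ℝ => (max (x - t) 0) ^ 2) := by fun_prop

lemma tp_mem (μ σ t lam s p : ℝ) (hp0 : 0 ≤ p) (hp1 : 2*p ≤ 1)
    (hps : 2 * p * s ^ 2 = σ ^ 2)
    (hcon : p * (max (t - (μ - s)) 0 + max (t - (μ + s)) 0) + (1 - 2*p) * max (t - μ) 0 ≤ lam) :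
    (p * ((max ((μ - s) - t) 0) ^ 2 + (max ((μ + s) - t) 0) ^ 2)
      + (1 - 2*p) * (max (μ - t) 0) ^ 2) ∈ symTSVSetLam μ σ t lam := by
  refine ⟨tp μ s p, tp_prob _ _ _ hp0 hp1, tp_integrable meas_sq _ _ _, ⟨μ, tp_symm μ s p⟩,
    ?_, ?_, ?_, ?_⟩
  · rw [tp_integral meas_id _ _ _ hp0 hp1]; ring
  · rw [tp_integral meas_sq _ _ _ hp0 hp1]; linear_combination hps
  · rw [tp_integral (meas_con t) _ _ _ hp0 hp1]; exact hcon
  · rw [tp_integral (meas_tgt t) _ _ _ hp0 hp1]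

lemma case3_gt (μ σ t lam w : ℝ) (hσ : 0 < σ) (h1 : μ < t) (hlamc : t - μ < lam)
    (hw : w < σ^2/2) : ∃ y ∈ symTSVSetLam μ σ t lam, w < y := by
  have hc0 : 0 < t - μ := by linarith
  obtain ⟨c, hc⟩ : ∃ c : ℝ, c = t - μ := ⟨_, rfl⟩
  obtain ⟨ε, hε⟩ : ∃ ε : ℝ, ε = σ^2/2 - w := ⟨_, rfl⟩
  have hε0 : 0 < ε := by rw [hε]; linarith
  obtain ⟨s, hsσ, hsc, hsl, hse⟩ : ∃ s : ℝ, σ ≤ s ∧ c ≤ s ∧ σ^2/(lam - c) ≤ s ∧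
      σ^2*c/ε + 1 ≤ s :=
    ⟨max (max σ c) (max (σ^2/(lam - c)) (σ^2*c/ε + 1)),
      le_trans (le_max_left _ _) (le_max_left _ _),
      le_trans (le_max_right _ _) (le_max_left _ _),
      le_trans (le_max_left _ _) (le_max_right _ _),
      le_trans (le_max_right _ _) (le_max_right _ _)⟩
  have hs0 : 0 < s := lt_of_lt_of_le hσ hsσ
  obtain ⟨p, hp⟩ : ∃ p : ℝ, p = σ^2/(2*s^2) := ⟨_, rfl⟩
  have hp0 : 0 ≤ p := by rw [hp]; positivity
  have hp1 : 2*p ≤ 1 := by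
    rw [hp, mul_div_assoc']
    rw [div_le_one (by positivity)]
    nlinarith
  have hps : 2*p*s^2 = σ^2 := by
    rw [hp]; field_simp
  have hlc : 0 < lam - c := by rw [hc]; linarith
  have hslσ : σ^2 ≤ s * (lam - c) := (div_le_iff₀ hlc).mp hsl
  have hcon : p * (max (t - (μ - s)) 0 + max (t - (μ + s)) 0)
      + (1 - 2*p) * max (t - μ) 0 ≤ lam := by
    rw [max_eq_left (by linarith : (0:ℝ) ≤ t - (μ - s)),
      max_eq_right (by nlinarith : t - (μ + s) ≤ 0),
      max_eq_left (by linarith : (0:ℝ) ≤ t - μ)]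
    have key : p*(s - c) ≤ lam - c := by
      rw [hp, div_mul_eq_mul_div, div_le_iff₀ (by positivity : (0:ℝ) < 2*s^2)]
      nlinarith [hslσ, hs0, hsc, sq_nonneg σ]
    have e : p*(t - (μ - s) + 0) + (1 - 2*p)*(t - μ) = (t - μ) + p*(s - c) := by
      rw [hc]; ring
    rw [e, hc]
    linarith
  refine ⟨_, tp_mem μ σ t lam s p hp0 hp1 hps hcon, ?_⟩
  rw [max_eq_right (by nlinarith : (μ - s) - t ≤ 0),
    max_eq_left (by nlinarith : (0:ℝ) ≤ (μ + s) - t),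
    max_eq_right (by linarith : μ - t ≤ 0)]
  have e : p*((0:ℝ)^2 + ((μ + s) - t)^2) + (1 - 2*p)*(0:ℝ)^2 = σ^2*(s - c)^2/(2*s^2) := by
    rw [hp, hc]; field_simp; ring
  rw [e]
  have hw' : w = σ^2/2 - ε := by rw [hε]; ring
  have h9 : σ^2*c < ε*s := by
    have h99 : σ^2*c/ε < s := by linarith
    calc σ^2*c = (σ^2*c/ε)*ε := by rw [div_mul_cancel₀ _ hε0.ne']
      _ < s*ε := mul_lt_mul_of_pos_right h99 hε0
      _ = ε*s := mul_comm _ _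
  rw [lt_div_iff₀ (by positivity : (0:ℝ) < 2*s^2)]
  have h10 : 2*(σ^2*c)*s < 2*(ε*s)*s := by nlinarith [h9, hs0]
  have hA : w*(2*s^2) = σ^2*s^2 - 2*(ε*s)*s := by rw [hw']; ring
  have hB : σ^2*(s - c)^2 = σ^2*s^2 - 2*(σ^2*c)*s + (σ*c)^2 := by ring
  linarith [h10, sq_nonneg (σ*c), hA, hB]

end helpers

theorem stmt_10 (μ σ t lam m : ℝ) (hμ : 0 < μ) (hσ : 0 < σ)
    (hlam : max (t - μ) 0 < lam) (hm : m = lam - μ + t) (hσm : σ ≤ m) :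
    0 < m ∧
    (μ - m ≤ t → t ≤ μ - σ → sSup (symTSVSetLam μ σ t lam) = σ ^ 2 + (t - μ) ^ 2) ∧
    (μ - σ < t → t ≤ μ → sSup (symTSVSetLam μ σ t lam) = (μ - t + σ) ^ 2 / 2) ∧
    (μ < t → sSup (symTSVSetLam μ σ t lam) = σ ^ 2 / 2) := by
  have hm0 : 0 < m := lt_of_lt_of_le hσ hσm
  have hlam0 : 0 < lam := lt_of_le_of_lt (le_max_right _ _) hlam
  refine ⟨hm0, fun h1 h2 => ?_, fun h1 h2 => ?_, fun h1 => ?_⟩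
  · -- Case 1 : μ - m ≤ t ≤ μ - σ
    have hcon : (1/2 : ℝ) * (max (t - (μ - σ)) 0 + max (t - (μ + σ)) 0)
        + (1 - 2*(1/2)) * max (t - μ) 0 ≤ lam := by
      rw [max_eq_right (by linarith : t - (μ - σ) ≤ 0),
        max_eq_right (by linarith : t - (μ + σ) ≤ 0),
        max_eq_right (by linarith : t - μ ≤ 0)]
      norm_num; linarith
    have hmem := tp_mem μ σ t lam σ (1/2) (by norm_num) (by norm_num) (by ring) hcon
    have hval : (1/2 : ℝ) * ((max ((μ - σ) - t) 0) ^ 2 + (max ((μ + σ) - t) 0) ^ 2)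
        + (1 - 2*(1/2)) * (max (μ - t) 0) ^ 2 = σ ^ 2 + (t - μ) ^ 2 := by
      rw [max_eq_left (by linarith : (0:ℝ) ≤ (μ - σ) - t),
        max_eq_left (by linarith : (0:ℝ) ≤ (μ + σ) - t)]
      ring
    rw [hval] at hmem
    refine IsGreatest.csSup_eq ⟨hmem, fun y hy => ?_⟩
    obtain ⟨Q, hQp, hQ2, -, hmean, hmom, -, rfl⟩ := hy
    haveI := hQp
    exact ub1 hQ2 hmean hmom
  · -- Case 2 : μ - σ < t ≤ μ
    have hlamd : σ + (μ - t) ≤ lam := by rw [hm] at hσm; linarith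
    have hcon : (1/2 : ℝ) * (max (t - (μ - σ)) 0 + max (t - (μ + σ)) 0)
        + (1 - 2*(1/2)) * max (t - μ) 0 ≤ lam := by
      rw [max_eq_left (by linarith : (0:ℝ) ≤ t - (μ - σ)),
        max_eq_right (by linarith : t - (μ + σ) ≤ 0),
        max_eq_right (by linarith : t - μ ≤ 0)]
      norm_num; linarith
    have hmem := tp_mem μ σ t lam σ (1/2) (by norm_num) (by norm_num) (by ring) hcon
    have hval : (1/2 : ℝ) * ((max ((μ - σ) - t) 0) ^ 2 + (max ((μ + σ) - t) 0) ^ 2)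
        + (1 - 2*(1/2)) * (max (μ - t) 0) ^ 2 = (μ - t + σ) ^ 2 / 2 := by
      rw [max_eq_right (by linarith : (μ - σ) - t ≤ 0),
        max_eq_left (by linarith : (0:ℝ) ≤ (μ + σ) - t)]
      ring
    rw [hval] at hmem
    refine IsGreatest.csSup_eq ⟨hmem, fun y hy => ?_⟩
    obtain ⟨Q, hQp, hQ2, ⟨a, hsym⟩, hmean, hmom, -, rfl⟩ := hy
    haveI := hQp
    have hmapa := map_eq a hsym
    have ha : a = μ := center_eq hQ2 hmapa hmean
    rw [ha] at hmapa
    have hd0 : (0:ℝ) ≤ μ - t := by linarith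
    have hdσ : μ - t ≤ σ := by linarith
    have hg : Integrable (fun x => ((σ+(μ-t))*(x-μ)^2 + σ*((μ-t)^2+(μ-t)*σ))/σ) Q :=
      (((int_sq_sub hQ2 μ).const_mul (σ+(μ-t))).add (integrable_const _)).div_const σ
    have hpt : ∀ x, (max (x - t) 0) ^ 2 + (max ((2*μ - x) - t) 0) ^ 2 ≤
        ((σ+(μ-t))*(x-μ)^2 + σ*((μ-t)^2+(μ-t)*σ))/σ := by
      intro x
      rw [le_div_iff₀ hσ]
      have hk := key2 σ (μ - t) (x - μ) hσ hd0 hdσ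
      have e1 : (x - μ) + (μ - t) = x - t := by ring
      have e2 : (μ - t) - (x - μ) = (2*μ - x) - t := by ring
      rw [e1, e2] at hk
      linarith
    have hb := reflect_bound hQ2 hmapa hg hpt
    have hint : ∫ x, ((σ+(μ-t))*(x-μ)^2 + σ*((μ-t)^2+(μ-t)*σ))/σ ∂Q = (μ - t + σ)^2 := by
      rw [integral_div, integral_add ((int_sq_sub hQ2 μ).const_mul _) (integrable_const _),
        integral_const_mul, moment2 hQ2 hmean hmom μ, integral_const, probReal_univ]
      simp
      field_simp
      ring
    rw [hint] at hb
    linarith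
  · -- Case 3 : μ < t
    have hc0 : 0 < t - μ := by linarith
    have hlamc : t - μ < lam := by rwa [max_eq_left hc0.le] at hlam
    have hub : ∀ y ∈ symTSVSetLam μ σ t lam, y ≤ σ^2/2 := by
      rintro y ⟨Q, hQp, hQ2, ⟨a, hsym⟩, hmean, hmom, -, rfl⟩
      haveI := hQp
      have hmapa := map_eq a hsym
      have ha : a = μ := center_eq hQ2 hmapa hmean
      rw [ha] at hmapa
      have hb := reflect_bound hQ2 hmapa (int_sq_sub hQ2 μ)
        (fun x => key3 μ t x (by linarith))
      rw [moment2 hQ2 hmean hmom μ] at hb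
      have hz : (μ - μ)^2 = 0 := by ring
      rw [hz] at hb
      linarith
    have hex : ∀ w < σ^2/2, ∃ y ∈ symTSVSetLam μ σ t lam, w < y :=
      fun w hw => case3_gt μ σ t lam w hσ h1 hlamc hw
    refine csSup_eq_of_forall_le_of_forall_lt_exists_gt ?_ hub hex
    obtain ⟨y, hy, -⟩ := hex (σ^2/2 - 1) (by linarith)
    exact ⟨y, hy⟩
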